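/- arXiv:2201.00012 — 2 statements merged into one kernel-verified Lean document; each statement's English description precedes it below -/
import Mathlib

section
/- (Theorem 3.1, optimizer equivalence.) Let r_1, …, r_k : T → ℝ be reward functions and let w ∈ ℝ^k satisfy w_i ≥ 0 for all i and Σ_{i=1}^k w_i = 1. Then a probability mass function π* on T minimizes the weighted Kullback–Leibler objective Σ_{i=1}^k w_i · D(π‖p_{r_i}) over all probability mass functions π on T if and only if π* maximizes the entropy-regularized return Σ_{τ ∈ T} π(τ)·(Σ_{i=1}^k w_i · r_i(τ)) − Σ_{τ : π(τ)>0} π(τ)·log(π(τ)/μ(τ)) over all probability mass functions π on T. -/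
open Real Finset

/-- Partition function `Z_r = ∑ τ, μ(τ) · exp(r(τ))`. -/
noncomputable def Z {T : Type*} [Fintype T] (μ r : T → ℝ) : ℝ :=
  ∑ τ, μ τ * Real.exp (r τ)

/-- Gibbs distribution `p_r(τ) = μ(τ) · exp(r(τ)) / Z_r`. -/
noncomputable def gibbs {T : Type*} [Fintype T] (μ r : T → ℝ) : T → ℝ :=
  fun τ => μ τ * Real.exp (r τ) / Z μ r

/-- A probability mass function on a finite type: nonnegative and summing to 1. -/
def IsPMF {T : Type*} [Fintype T] (pi : T → ℝ) : Prop :=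
  (∀ τ, 0 ≤ pi τ) ∧ ∑ τ, pi τ = 1

/-- Kullback–Leibler divergence `D(pi‖q) = ∑_{τ : pi(τ)>0} pi(τ) · log (pi(τ)/q(τ))`. -/
noncomputable def KL {T : Type*} [Fintype T] (pi q : T → ℝ) : ℝ :=
  ∑ τ ∈ Finset.univ.filter (fun τ => 0 < pi τ), pi τ * Real.log (pi τ / q τ)

lemma KL_gibbs_eq {T : Type*} [Fintype T] [Nonempty T]
    (μ : T → ℝ) (hμ : ∀ τ, 0 < μ τ) (r : T → ℝ) (pi : T → ℝ) (hpi : IsPMF pi) :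
    KL pi (gibbs μ r) =
      (∑ τ ∈ Finset.univ.filter (fun τ => 0 < pi τ), pi τ * Real.log (pi τ / μ τ))
        - (∑ τ, pi τ * r τ) + Real.log (Z μ r) := by
  have hZ : 0 < Z μ r := Finset.sum_pos (fun τ _ => mul_pos (hμ τ) (Real.exp_pos _)) Finset.univ_nonempty
  have hext : ∀ (f : T → ℝ), ∑ τ ∈ Finset.univ.filter (fun τ => 0 < pi τ), pi τ * f τ
      = ∑ τ, pi τ * f τ := by
    intro f
    refine Finset.sum_subset (Finset.filter_subset _ _) ?_
    intro τ _ hτ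
    simp only [Finset.mem_filter, Finset.mem_univ, true_and] at hτ
    have := hpi.1 τ
    have : pi τ = 0 := le_antisymm (not_lt.mp hτ) this
    simp [this]
  have hsum1 : ∑ τ ∈ Finset.univ.filter (fun τ => 0 < pi τ), pi τ = 1 := by
    rw [show (∑ τ ∈ Finset.univ.filter (fun τ => 0 < pi τ), pi τ)
        = ∑ τ ∈ Finset.univ.filter (fun τ => 0 < pi τ), pi τ * 1 by simp,
      hext (fun _ => 1)]
    simpa using hpi.2
  unfold KL gibbs
  have hterm : ∀ τ ∈ Finset.univ.filter (fun τ => 0 < pi τ),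
      pi τ * Real.log (pi τ / (μ τ * Real.exp (r τ) / Z μ r))
      = pi τ * (Real.log (pi τ / μ τ) - r τ + Real.log (Z μ r)) := by
    intro τ hτ
    simp only [Finset.mem_filter, Finset.mem_univ, true_and] at hτ
    congr 1
    rw [Real.log_div hτ.ne' (div_pos (mul_pos (hμ τ) (Real.exp_pos _)) hZ).ne',
      Real.log_div (mul_pos (hμ τ) (Real.exp_pos _)).ne' hZ.ne',
      Real.log_mul (hμ τ).ne' (Real.exp_pos _).ne', Real.log_exp,
      Real.log_div hτ.ne' (hμ τ).ne']
    ring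
  rw [Finset.sum_congr rfl hterm]
  simp only [mul_sub, mul_add, Finset.sum_add_distrib, Finset.sum_sub_distrib]
  rw [hext r, ← Finset.sum_mul, hsum1]
  ring

/-- Theorem 3.1 -/
theorem weighted_kl_min_iff_entropy_regularized_max {T : Type*} [Fintype T] [Nonempty T]
    (μ : T → ℝ) (hμ : ∀ τ, 0 < μ τ)
    (k : ℕ) (r : Fin k → T → ℝ) (w : Fin k → ℝ)
    (hw0 : ∀ i, 0 ≤ w i) (hw1 : ∑ i, w i = 1)
    (pistar : T → ℝ) (hpistar : IsPMF pistar) :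
    (∀ pi : T → ℝ, IsPMF pi →
        ∑ i, w i * KL pistar (gibbs μ (r i)) ≤ ∑ i, w i * KL pi (gibbs μ (r i)))
    ↔
    (∀ pi : T → ℝ, IsPMF pi →
        (∑ τ, pi τ * (∑ i, w i * r i τ))
          - (∑ τ ∈ Finset.univ.filter (fun τ => 0 < pi τ), pi τ * Real.log (pi τ / μ τ))
        ≤ (∑ τ, pistar τ * (∑ i, w i * r i τ))
          - (∑ τ ∈ Finset.univ.filter (fun τ => 0 < pistar τ),
              pistar τ * Real.log (pistar τ / μ τ))) := by
  have key : ∀ pi : T → ℝ, IsPMF pi →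
      ∑ i, w i * KL pi (gibbs μ (r i)) =
        (∑ i, w i * Real.log (Z μ (r i)))
        - ((∑ τ, pi τ * (∑ i, w i * r i τ))
          - (∑ τ ∈ Finset.univ.filter (fun τ => 0 < pi τ), pi τ * Real.log (pi τ / μ τ))) := by
    intro pi hpi
    have : ∀ i, w i * KL pi (gibbs μ (r i)) =
        w i * ((∑ τ ∈ Finset.univ.filter (fun τ => 0 < pi τ), pi τ * Real.log (pi τ / μ τ))
          - (∑ τ, pi τ * r i τ) + Real.log (Z μ (r i))) := by
      intro i; rw [KL_gibbs_eq μ hμ (r i) pi hpi]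
    rw [Finset.sum_congr rfl (fun i _ => this i)]
    have hswap : ∑ i, w i * ∑ τ, pi τ * r i τ = ∑ τ, pi τ * (∑ i, w i * r i τ) := by
      simp_rw [Finset.mul_sum]
      rw [Finset.sum_comm]
      exact Finset.sum_congr rfl fun τ _ => Finset.sum_congr rfl fun i _ => by ring
    simp only [mul_sub, mul_add, Finset.sum_add_distrib, Finset.sum_sub_distrib]
    rw [← Finset.sum_mul, hw1, one_mul, hswap]
    ring
  constructor
  · intro h pi hpi
    have h1 := h pi hpi
    rw [key pi hpi, key pistar hpistar] at h1
    linarith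
  · intro h pi hpi
    have h1 := h pi hpi
    rw [key pi hpi, key pistar hpistar]
    linarith
end

section
/- Let r_1, …, r_k : T → ℝ be reward functions, let w ∈ ℝ^k satisfy w_i ≥ 0 for all i and Σ_{i=1}^k w_i = 1, and set r̄(τ) = Σ_{i=1}^k w_i · r_i(τ). Then for every probability mass function π on T, Σ_{i=1}^k w_i · D(π‖p_{r_i}) = D(π‖p_{r̄}) + Σ_{i=1}^k w_i · log Z_{r_i} − log Z_{r̄}; consequently the weighted Kullback–Leibler objective Σ_{i=1}^k w_i · D(π‖p_{r_i}) is minimized over probability mass functions π exactly at π = p_{r̄}, and this minimizer is unique. -/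
open Real Finset

section Aux
set_option linter.unusedSectionVars false
variable {T : Type*} [Fintype T] [Nonempty T]

lemma Z_pos (μ r : T → ℝ) (hμ : ∀ τ, 0 < μ τ) : 0 < Z μ r :=
  Finset.sum_pos (fun τ _ => mul_pos (hμ τ) (Real.exp_pos _)) univ_nonempty

lemma gibbs_pos (μ r : T → ℝ) (hμ : ∀ τ, 0 < μ τ) (τ : T) : 0 < gibbs μ r τ := by
  have := Z_pos μ r hμ
  have := hμ τ
  unfold gibbs; positivity

lemma gibbs_pmf (μ r : T → ℝ) (hμ : ∀ τ, 0 < μ τ) : IsPMF (gibbs μ r) := by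
  refine ⟨fun τ => (gibbs_pos μ r hμ τ).le, ?_⟩
  unfold gibbs
  rw [← Finset.sum_div, ← Z, div_self (Z_pos μ r hμ).ne']

lemma sum_support (pi : T → ℝ) (hpi : IsPMF pi) :
    ∑ τ ∈ Finset.univ.filter (fun τ => 0 < pi τ), pi τ = 1 := by
  rw [← hpi.2]
  refine Finset.sum_subset (Finset.filter_subset _ _) ?_
  intro τ _ hτ
  simp only [Finset.mem_filter, Finset.mem_univ, true_and] at hτ
  exact le_antisymm (not_lt.1 hτ) (hpi.1 τ)

lemma kl_expand (μ r : T → ℝ) (hμ : ∀ τ, 0 < μ τ) (pi : T → ℝ) (hpi : IsPMF pi) :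
    KL pi (gibbs μ r) =
      (∑ τ ∈ Finset.univ.filter (fun τ => 0 < pi τ),
        pi τ * (Real.log (pi τ / μ τ) - r τ)) + Real.log (Z μ r) := by
  have hZ := Z_pos μ r hμ
  unfold KL
  have : ∀ τ ∈ Finset.univ.filter (fun τ => 0 < pi τ),
      pi τ * Real.log (pi τ / gibbs μ r τ)
        = pi τ * (Real.log (pi τ / μ τ) - r τ) + pi τ * Real.log (Z μ r) := by
    intro τ hτ
    simp only [Finset.mem_filter, Finset.mem_univ, true_and] at hτ
    have hμτ := hμ τ
    have he : (0:ℝ) < Real.exp (r τ) := Real.exp_pos _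
    unfold gibbs
    rw [div_div_eq_mul_div, Real.log_div (by positivity) (by positivity),
        Real.log_mul (by positivity) hZ.ne', Real.log_mul hμτ.ne' he.ne',
        Real.log_exp, Real.log_div hτ.ne' hμτ.ne']
    ring
  rw [Finset.sum_congr rfl this, Finset.sum_add_distrib, ← Finset.sum_mul,
      sum_support pi hpi, one_mul]

lemma kl_self (q : T → ℝ) (hq : ∀ τ, 0 < q τ) : KL q q = 0 := by
  unfold KL
  refine Finset.sum_eq_zero fun τ hτ => ?_
  rw [div_self (hq τ).ne', Real.log_one, mul_zero]

lemma kl_nonneg_eq (pi q : T → ℝ) (hpi : IsPMF pi) (hq : IsPMF q) (hqpos : ∀ τ, 0 < q τ) :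
    0 ≤ KL pi q ∧ (KL pi q = 0 → pi = q) := by
  classical
  set S := Finset.univ.filter (fun τ => 0 < pi τ) with hS
  have hmem : ∀ τ ∈ S, 0 < pi τ := by
    intro τ hτ; simp only [hS, Finset.mem_filter, Finset.mem_univ, true_and] at hτ; exact hτ
  have h1 : ∀ τ ∈ S, pi τ - q τ ≤ pi τ * Real.log (pi τ / q τ) := by
    intro τ hτ
    have hp := hmem τ hτ
    have hq' := hqpos τ
    have hlb := Real.log_le_sub_one_of_pos (show (0:ℝ) < q τ / pi τ by positivity)
    have h2 : pi τ * Real.log (q τ / pi τ) ≤ pi τ * (q τ / pi τ - 1) :=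
      mul_le_mul_of_nonneg_left hlb hp.le
    have h3 : pi τ * (q τ / pi τ - 1) = q τ - pi τ := by field_simp
    have hlog : Real.log (pi τ / q τ) = - Real.log (q τ / pi τ) := by
      rw [← Real.log_inv, inv_div]
    rw [hlog]; nlinarith
  have hSpi : ∑ τ ∈ S, pi τ = 1 := sum_support pi hpi
  have hSq : ∑ τ ∈ S, q τ ≤ 1 := by
    rw [← hq.2]
    exact Finset.sum_le_sum_of_subset_of_nonneg (Finset.filter_subset _ _)
      (fun τ _ _ => (hqpos τ).le)
  have hsum : ∑ τ ∈ S, (pi τ - q τ) ≤ KL pi q := Finset.sum_le_sum h1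
  have hsub : ∑ τ ∈ S, (pi τ - q τ) = 1 - ∑ τ ∈ S, q τ := by
    rw [Finset.sum_sub_distrib, hSpi]
  have hnn : 0 ≤ KL pi q := by
    rw [hsub] at hsum; linarith
  refine ⟨hnn, fun h0 => ?_⟩
  -- equality analysis
  have hdiff : ∑ τ ∈ S, (pi τ * Real.log (pi τ / q τ) - (pi τ - q τ)) = (∑ τ ∈ S, q τ) - 1 := by
    rw [Finset.sum_sub_distrib]
    unfold KL at h0
    rw [← hS] at h0
    rw [h0, hsub]; ring
  have hdnn : ∀ τ ∈ S, 0 ≤ pi τ * Real.log (pi τ / q τ) - (pi τ - q τ) :=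
    fun τ hτ => by linarith [h1 τ hτ]
  have hdle : ∑ τ ∈ S, (pi τ * Real.log (pi τ / q τ) - (pi τ - q τ)) ≤ 0 := by
    rw [hdiff]; linarith
  have hzero : ∀ τ ∈ S, pi τ * Real.log (pi τ / q τ) - (pi τ - q τ) = 0 := by
    intro τ hτ
    have := (Finset.sum_eq_zero_iff_of_nonneg hdnn).1 (le_antisymm hdle (Finset.sum_nonneg hdnn))
    exact this τ hτ
  have hSq1 : ∑ τ ∈ S, q τ = 1 := by
    have := hdiff
    rw [Finset.sum_eq_zero hzero] at this
    linarith
  have heqS : ∀ τ ∈ S, pi τ = q τ := by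
    intro τ hτ
    have hp := hmem τ hτ
    have hq' := hqpos τ
    by_contra hne
    have hne' : q τ / pi τ ≠ 1 := by
      intro h
      exact hne (by field_simp at h; linarith)
    have hlb := Real.log_lt_sub_one_of_pos (show (0:ℝ) < q τ / pi τ by positivity) hne'
    have h2 : pi τ * Real.log (q τ / pi τ) < pi τ * (q τ / pi τ - 1) :=
      (mul_lt_mul_iff_right₀ hp).2 hlb
    have h3 : pi τ * (q τ / pi τ - 1) = q τ - pi τ := by field_simp
    have hlog : Real.log (pi τ / q τ) = - Real.log (q τ / pi τ) := by
      rw [← Real.log_inv, inv_div]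
    have := hzero τ hτ
    rw [hlog] at this
    nlinarith
  -- S = univ
  have hfull : ∀ τ, τ ∈ S := by
    intro τ
    by_contra hτ
    have hsplit : (1:ℝ) = ∑ t ∈ S, q t + ∑ t ∈ Sᶜ, q t := by
      rw [Finset.sum_add_sum_compl, hq.2]
    have hcpos : 0 < ∑ t ∈ Sᶜ, q t := by
      refine Finset.sum_pos (fun t _ => hqpos t) ⟨τ, Finset.mem_compl.2 hτ⟩
    rw [hSq1] at hsplit; linarith
  funext τ
  exact heqS τ (hfull τ)

end Aux

/-- For convex weights `w` and `r̄ = ∑ i, w i · r i`, for every pmf `pi`: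
`∑ i, w i · D(pi‖p_{r i}) = D(pi‖p_{r̄}) + ∑ i, w i · log Z_{r i} − log Z_{r̄}`;
consequently the weighted KL objective is minimized over pmfs exactly at `pi = p_{r̄}`,
and this minimizer is unique. -/
theorem weighted_kl_eq_kl_mix_and_unique_min {T : Type*} [Fintype T] [Nonempty T]
    (μ : T → ℝ) (hμ : ∀ τ, 0 < μ τ)
    (k : ℕ) (r : Fin k → T → ℝ) (w : Fin k → ℝ)
    (hw0 : ∀ i, 0 ≤ w i) (hw1 : ∑ i, w i = 1)
    (rbar : T → ℝ) (hrbar : ∀ τ, rbar τ = ∑ i, w i * r i τ) :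
    (∀ pi : T → ℝ, IsPMF pi →
        ∑ i, w i * KL pi (gibbs μ (r i)) =
          KL pi (gibbs μ rbar) + (∑ i, w i * Real.log (Z μ (r i))) - Real.log (Z μ rbar))
    ∧
    (∀ pi : T → ℝ, IsPMF pi →
        ∑ i, w i * KL (gibbs μ rbar) (gibbs μ (r i)) ≤ ∑ i, w i * KL pi (gibbs μ (r i)))
    ∧
    (∀ pi : T → ℝ, IsPMF pi →
        ∑ i, w i * KL pi (gibbs μ (r i)) =
          ∑ i, w i * KL (gibbs μ rbar) (gibbs μ (r i)) → pi = gibbs μ rbar) := by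
  classical
  have hpbar : IsPMF (gibbs μ rbar) := gibbs_pmf μ rbar hμ
  have hpbarpos : ∀ τ, 0 < gibbs μ rbar τ := gibbs_pos μ rbar hμ
  have part1 : ∀ pi : T → ℝ, IsPMF pi →
      ∑ i, w i * KL pi (gibbs μ (r i)) =
        KL pi (gibbs μ rbar) + (∑ i, w i * Real.log (Z μ (r i))) - Real.log (Z μ rbar) := by
    intro pi hpi
    set S := Finset.univ.filter (fun τ => 0 < pi τ) with hS
    have hbar := kl_expand μ rbar hμ pi hpi
    have step1 : ∑ i, w i * KL pi (gibbs μ (r i)) =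
        (∑ i, ∑ τ ∈ S, ((pi τ * Real.log (pi τ / μ τ)) * w i - pi τ * (w i * r i τ)))
          + ∑ i, w i * Real.log (Z μ (r i)) := by
      rw [← Finset.sum_add_distrib]
      refine Finset.sum_congr rfl fun i _ => ?_
      rw [kl_expand μ (r i) hμ pi hpi, ← hS]
      rw [mul_add]
      congr 1
      rw [Finset.mul_sum]
      refine Finset.sum_congr rfl fun τ _ => ?_
      ring
    have step2 : (∑ i, ∑ τ ∈ S, ((pi τ * Real.log (pi τ / μ τ)) * w i - pi τ * (w i * r i τ))) =
        ∑ τ ∈ S, pi τ * (Real.log (pi τ / μ τ) - rbar τ) := by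
      rw [Finset.sum_comm]
      refine Finset.sum_congr rfl fun τ _ => ?_
      rw [Finset.sum_sub_distrib, ← Finset.mul_sum, ← Finset.mul_sum, hw1, ← hrbar τ]
      ring
    rw [step1, step2, hbar]
    ring
  refine ⟨part1, ?_, ?_⟩
  · intro pi hpi
    rw [part1 pi hpi, part1 (gibbs μ rbar) hpbar, kl_self _ hpbarpos]
    have := (kl_nonneg_eq pi (gibbs μ rbar) hpi hpbar hpbarpos).1
    linarith
  · intro pi hpi heq
    rw [part1 pi hpi, part1 (gibbs μ rbar) hpbar, kl_self _ hpbarpos] at heq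
    exact (kl_nonneg_eq pi (gibbs μ rbar) hpi hpbar hpbarpos).2 (by linarith)
end
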